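/- Linear (vertex) characterization of the noncontextual set: for a scenario S, let V denote the (finite) set of extreme points ξ̃(κ), κ ∈ V, of the measurement-assignment polytope of S. A behavior B = {p(k|j,i)} in S is noncontextual in S if and only if there exist probability distributions μ_i on V, one for each i ∈ I, such that ∑_{i∈I} (α^s_i − β^s_i) μ_i(κ) = 0 for every preparation equivalence s and every κ ∈ V, and ∑_{κ∈V} ξ̃_{k|j}(κ) μ_i(κ) = p(k|j,i) for all i ∈ I, j ∈ J, k ∈ K. -/

import Mathlib

open scoped BigOperators

/-- A probability distribution on a finite type. -/
def IsDist {X : Type} [Fintype X] (f : X → ℝ) : Prop :=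
  (∀ x, 0 ≤ f x) ∧ ∑ x, f x = 1

lemma isDist_prodFun {A B : Type} [Fintype A] [Fintype B] {f : A → ℝ} {g : B → ℝ}
    (hf : IsDist f) (hg : IsDist g) :
    IsDist (fun x : A × B => f x.1 * g x.2) := by
  refine ⟨fun x => mul_nonneg (hf.1 x.1) (hg.1 x.2), ?_⟩
  calc ∑ x : A × B, f x.1 * g x.2 = ∑ a, ∑ b, f a * g b := by
        rw [Fintype.sum_prod_type]
    _ = (∑ a, f a) * (∑ b, g b) := by rw [Finset.sum_mul_sum]
    _ = 1 := by rw [hf.2, hg.2, mul_one]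

lemma isDist_prodFun' {K1 J1 K2 J2 : Type} [Fintype K1] [Fintype J1] [Fintype K2] [Fintype J2]
    {f : K1 × J1 → ℝ} {g : K2 × J2 → ℝ} (hf : IsDist f) (hg : IsDist g) :
    IsDist (fun kj : (K1 × K2) × (J1 × J2) => f (kj.1.1, kj.2.1) * g (kj.1.2, kj.2.2)) := by
  refine ⟨fun kj => mul_nonneg (hf.1 _) (hg.1 _), ?_⟩
  have h := (isDist_prodFun hf hg).2
  rw [← h]
  exact Fintype.sum_equiv (Equiv.prodProdProdComm K1 K2 J1 J2) _ _ (by rintro ⟨⟨a, b⟩, c, d⟩; rfl)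

/-- A prepare-and-measure scenario: finite nonempty sets of preparations `I`,
measurements `J` and outcomes `K` (carried as type-class assumptions on the index
types), together with a family of preparation operational equivalences (pairs of
probability distributions on `I`) and a family of measurement operational
equivalences (pairs of probability distributions on `K × J`). -/
structure Scenario (I J K : Type) [Fintype I] [Fintype J] [Fintype K] where
  PE : Type
  ME : Type
  prepEq : PE → (I → ℝ) × (I → ℝ)
  measEq : ME → (K × J → ℝ) × (K × J → ℝ)
  prep_dist : ∀ s, IsDist (prepEq s).1 ∧ IsDist (prepEq s).2
  meas_dist : ∀ r, IsDist (measEq r).1 ∧ IsDist (measEq r).2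

/-- A behavior: a family `p k ∣ j, i` of nonnegative reals, normalized over outcomes. -/
def IsBehavior {I J K : Type} [Fintype I] [Fintype J] [Fintype K]
    (p : I → J → K → ℝ) : Prop :=
  (∀ i j k, 0 ≤ p i j k) ∧ ∀ i j, ∑ k, p i j k = 1

/-- A behavior is noncontextual in a scenario `S` if it admits a universally
noncontextual ontological model over a finite ontic space. -/
def Noncontextual {I J K : Type} [Fintype I] [Fintype J] [Fintype K]
    (S : Scenario I J K) (p : I → J → K → ℝ) : Prop :=
  ∃ (n : ℕ) (μ : I → Fin n → ℝ) (ξ : Fin n → J → K → ℝ),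
    (∀ i, IsDist (μ i)) ∧
    (∀ l j, IsDist (ξ l j)) ∧
    (∀ i j k, p i j k = ∑ l, ξ l j k * μ i l) ∧
    (∀ s l, ∑ i, ((S.prepEq s).1 i - (S.prepEq s).2 i) * μ i l = 0) ∧
    (∀ r l, ∑ kj : K × J, ((S.measEq r).1 kj - (S.measEq r).2 kj) * ξ l kj.2 kj.1 = 0)

/-- The juxtaposition of two behaviors. -/
def prodBehavior {I1 J1 K1 I2 J2 K2 : Type}
    [Fintype I1] [Fintype J1] [Fintype K1] [Fintype I2] [Fintype J2] [Fintype K2]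
    (p1 : I1 → J1 → K1 → ℝ) (p2 : I2 → J2 → K2 → ℝ) :
    I1 × I2 → J1 × J2 → K1 × K2 → ℝ :=
  fun i j k => p1 i.1 j.1 k.1 * p2 i.2 j.2 k.2

/-- The juxtaposition `S1 ⊗ S2` of two scenarios: preparation (resp. measurement)
equivalences are all pairs `(α ⊗ γ, β ⊗ γ)` with `(α, β)` an equivalence of `S1` and
`γ` an arbitrary distribution on the preparations (resp. measurement events) of `S2`,
together with the symmetric ones coming from `S2`. -/
def Scenario.prod {I1 J1 K1 I2 J2 K2 : Type}
    [Fintype I1] [Fintype J1] [Fintype K1] [Fintype I2] [Fintype J2] [Fintype K2]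
    (S1 : Scenario I1 J1 K1) (S2 : Scenario I2 J2 K2) :
    Scenario (I1 × I2) (J1 × J2) (K1 × K2) where
  PE := (S1.PE × {γ : I2 → ℝ // IsDist γ}) ⊕ (S2.PE × {γ : I1 → ℝ // IsDist γ})
  ME := (S1.ME × {γ : K2 × J2 → ℝ // IsDist γ}) ⊕ (S2.ME × {γ : K1 × J1 → ℝ // IsDist γ})
  prepEq := fun e =>
    match e with
    | Sum.inl (s, γ) =>
        (fun i => (S1.prepEq s).1 i.1 * γ.1 i.2, fun i => (S1.prepEq s).2 i.1 * γ.1 i.2)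
    | Sum.inr (s, γ) =>
        (fun i => γ.1 i.1 * (S2.prepEq s).1 i.2, fun i => γ.1 i.1 * (S2.prepEq s).2 i.2)
  measEq := fun e =>
    match e with
    | Sum.inl (r, γ) =>
        (fun kj => (S1.measEq r).1 (kj.1.1, kj.2.1) * γ.1 (kj.1.2, kj.2.2),
         fun kj => (S1.measEq r).2 (kj.1.1, kj.2.1) * γ.1 (kj.1.2, kj.2.2))
    | Sum.inr (r, γ) =>
        (fun kj => γ.1 (kj.1.1, kj.2.1) * (S2.measEq r).1 (kj.1.2, kj.2.2),
         fun kj => γ.1 (kj.1.1, kj.2.1) * (S2.measEq r).2 (kj.1.2, kj.2.2))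
  prep_dist := by
    rintro (⟨s, γ⟩ | ⟨s, γ⟩)
    · exact ⟨isDist_prodFun (S1.prep_dist s).1 γ.2, isDist_prodFun (S1.prep_dist s).2 γ.2⟩
    · exact ⟨isDist_prodFun γ.2 (S2.prep_dist s).1, isDist_prodFun γ.2 (S2.prep_dist s).2⟩
  meas_dist := by
    rintro (⟨r, γ⟩ | ⟨r, γ⟩)
    · exact ⟨isDist_prodFun' (S1.meas_dist r).1 γ.2, isDist_prodFun' (S1.meas_dist r).2 γ.2⟩
    · exact ⟨isDist_prodFun' γ.2 (S2.meas_dist r).1, isDist_prodFun' γ.2 (S2.meas_dist r).2⟩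

/-- A free operation: a pre-processing of preparations, a pre-processing of
measurement choices and, for each simulated measurement, a post-processing of the
outcomes, all given by stochastic maps. -/
structure FreeOp (I J K I' J' K' : Type)
    [Fintype I] [Fintype J] [Fintype K] [Fintype I'] [Fintype J'] [Fintype K'] where
  qP : I' → I → ℝ
  qM : J' → J → ℝ
  qO : J' → K → K' → ℝ
  qP_dist : ∀ i', IsDist (qP i')
  qM_dist : ∀ j', IsDist (qM j')
  qO_dist : ∀ j' k, IsDist (qO j' k)

/-- Action of a free operation on a behavior. -/
def FreeOp.apply {I J K I' J' K' : Type}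
    [Fintype I] [Fintype J] [Fintype K] [Fintype I'] [Fintype J'] [Fintype K']
    (T : FreeOp I J K I' J' K') (p : I → J → K → ℝ) : I' → J' → K' → ℝ :=
  fun i' j' k' => ∑ i, ∑ j, ∑ k, T.qO j' k k' * p i j k * T.qM j' j * T.qP i' i

/-- `T` lifts the operational equivalences of `S'` to those of `S`. -/
def LiftsEquivalences {I J K I' J' K' : Type}
    [Fintype I] [Fintype J] [Fintype K] [Fintype I'] [Fintype J'] [Fintype K']
    (S : Scenario I J K) (S' : Scenario I' J' K') (T : FreeOp I J K I' J' K') : Prop :=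
  (∀ s' : S'.PE, ∃ s : S.PE, ∀ i : I,
      ∑ i' : I', ((S'.prepEq s').1 i' - (S'.prepEq s').2 i') * T.qP i' i
        = (S.prepEq s).1 i - (S.prepEq s).2 i) ∧
  (∀ r' : S'.ME, ∃ r : S.ME, ∀ k : K, ∀ j : J,
      ∑ kj' : K' × J', ((S'.measEq r').1 kj' - (S'.measEq r').2 kj') *
          (T.qO kj'.2 k kj'.1 * T.qM kj'.2 j)
        = (S.measEq r).1 (k, j) - (S.measEq r).2 (k, j))

/-- The contextual fraction. -/
noncomputable def ctxFraction {I J K : Type} [Fintype I] [Fintype J] [Fintype K]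
    (S : Scenario I J K) (p : I → J → K → ℝ) : ℝ :=
  1 - sSup {l : ℝ | 0 ≤ l ∧ l ≤ 1 ∧ ∃ q q' : I → J → K → ℝ,
      Noncontextual S q ∧ IsBehavior q' ∧
      ∀ i j k, p i j k = l * q i j k + (1 - l) * q' i j k}

/-- The robustness of contextuality. -/
noncomputable def robustness {I J K : Type} [Fintype I] [Fintype J] [Fintype K]
    (S : Scenario I J K) (p : I → J → K → ℝ) : ℝ :=
  sInf {l : ℝ | 0 ≤ l ∧ l ≤ 1 ∧ ∃ q : I → J → K → ℝ, Noncontextual S q ∧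
      Noncontextual S (fun i j k => l * q i j k + (1 - l) * p i j k)}

/-- The robustness with respect to a fixed reference behavior. -/
noncomputable def refRobustness {I J K : Type} [Fintype I] [Fintype J] [Fintype K]
    (S : Scenario I J K) (pref p : I → J → K → ℝ) : ℝ :=
  sInf {l : ℝ | 0 ≤ l ∧ l ≤ 1 ∧
      Noncontextual S (fun i j k => l * pref i j k + (1 - l) * p i j k)}

/-- One term of the Kullback-Leibler divergence, with the conventions
`0 log (0/q) = 0` and `p log (p/0) = ∞` for `p > 0`. -/
noncomputable def klTerm (p q : ℝ) : EReal :=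
  if p = 0 then 0 else if q = 0 then ⊤ else ((p * Real.log (p / q) : ℝ) : EReal)

/-- KL divergence between behaviors: maximum over preparations and measurements. -/
noncomputable def DKL {I J K : Type} [Fintype I] [Fintype J] [Fintype K]
    (p q : I → J → K → ℝ) : EReal :=
  ⨆ i : I, ⨆ j : J, ∑ k : K, klTerm (p i j k) (q i j k)

/-- The relative entropy of contextuality. -/
noncomputable def relEntCtx {I J K : Type} [Fintype I] [Fintype J] [Fintype K]
    (S : Scenario I J K) (p : I → J → K → ℝ) : EReal :=
  ⨅ q ∈ {q : I → J → K → ℝ | Noncontextual S q}, DKL p q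

/-- ℓ1 distance between behaviors: maximum over preparations and measurements. -/
noncomputable def D1 {I J K : Type} [Fintype I] [Fintype J] [Fintype K]
    (p q : I → J → K → ℝ) : ℝ :=
  ⨆ ij : I × J, ∑ k : K, |p ij.1 ij.2 k - q ij.1 ij.2 k|

/-- The ℓ1-contextuality distance. -/
noncomputable def l1CtxDistance {I J K : Type} [Fintype I] [Fintype J] [Fintype K]
    (S : Scenario I J K) (p : I → J → K → ℝ) : ℝ :=
  sInf {d : ℝ | ∃ q : I → J → K → ℝ, Noncontextual S q ∧ D1 p q = d}

/-- The uniform ℓ1-contextuality distance. -/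
noncomputable def uniformL1CtxDistance {I J K : Type} [Fintype I] [Fintype J] [Fintype K]
    (S : Scenario I J K) (p : I → J → K → ℝ) : ℝ :=
  (1 / (2 * (Fintype.card I : ℝ) * (Fintype.card J : ℝ))) *
    sInf {d : ℝ | ∃ q : I → J → K → ℝ, Noncontextual S q ∧
      ∑ i, ∑ j, ∑ k, |p i j k - q i j k| = d}

/-- The measurement-assignment polytope of a scenario. -/
def MAPolytope {I J K : Type} [Fintype I] [Fintype J] [Fintype K]
    (S : Scenario I J K) : Set (K × J → ℝ) :=
  {ξ | (∀ kj, 0 ≤ ξ kj) ∧ (∀ j, ∑ k, ξ (k, j) = 1) ∧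
    ∀ r, ∑ kj : K × J, ((S.measEq r).1 kj - (S.measEq r).2 kj) * ξ kj = 0}

lemma convex_MAPolytope {I J K : Type} [Fintype I] [Fintype J] [Fintype K]
    (S : Scenario I J K) : Convex ℝ (MAPolytope S) := by
  rintro x ⟨hx0, hx1, hx2⟩ y ⟨hy0, hy1, hy2⟩ a b ha hb hab
  refine ⟨fun kj => add_nonneg (mul_nonneg ha (hx0 kj)) (mul_nonneg hb (hy0 kj)), fun j => ?_,
    fun r => ?_⟩
  · simp only [Pi.add_apply, Pi.smul_apply, smul_eq_mul, Finset.sum_add_distrib,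
      ← Finset.mul_sum, hx1 j, hy1 j, mul_one]
    exact hab
  · simp only [Pi.add_apply, Pi.smul_apply, smul_eq_mul, mul_add, Finset.sum_add_distrib]
    have : ∀ c : ℝ, ∀ z : K × J → ℝ, (∀ r, ∑ kj : K × J,
        ((S.measEq r).1 kj - (S.measEq r).2 kj) * z kj = 0) →
        ∑ kj : K × J, ((S.measEq r).1 kj - (S.measEq r).2 kj) * (c * z kj) = 0 := by
      intro c z hz
      have := hz r
      calc ∑ kj : K × J, ((S.measEq r).1 kj - (S.measEq r).2 kj) * (c * z kj)
          = c * ∑ kj : K × J, ((S.measEq r).1 kj - (S.measEq r).2 kj) * z kj := by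
            rw [Finset.mul_sum]; exact Finset.sum_congr rfl fun kj _ => by ring
        _ = 0 := by rw [this, mul_zero]
    rw [this a x hx2, this b y hy2, add_zero]

lemma isCompact_MAPolytope {I J K : Type} [Fintype I] [Fintype J] [Fintype K]
    (S : Scenario I J K) : IsCompact (MAPolytope S) := by
  have hclosed : IsClosed (MAPolytope S) := by
    have h1 : IsClosed {ξ : K × J → ℝ | ∀ kj, 0 ≤ ξ kj} := by
      rw [Set.setOf_forall]
      exact isClosed_iInter fun kj => isClosed_le continuous_const (continuous_apply kj)
    have h2 : IsClosed {ξ : K × J → ℝ | ∀ j, ∑ k, ξ (k, j) = 1} := by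
      rw [Set.setOf_forall]
      exact isClosed_iInter fun j => isClosed_eq
        (continuous_finset_sum _ fun k _ => continuous_apply (k, j)) continuous_const
    have h3 : IsClosed {ξ : K × J → ℝ | ∀ r, ∑ kj : K × J,
        ((S.measEq r).1 kj - (S.measEq r).2 kj) * ξ kj = 0} := by
      rw [Set.setOf_forall]
      exact isClosed_iInter fun r => isClosed_eq
        (continuous_finset_sum _ fun kj _ => (continuous_const.mul (continuous_apply kj)))
        continuous_const
    have : MAPolytope S = {ξ : K × J → ℝ | ∀ kj, 0 ≤ ξ kj} ∩
        ({ξ : K × J → ℝ | ∀ j, ∑ k, ξ (k, j) = 1} ∩ {ξ : K × J → ℝ | ∀ r, ∑ kj : K × J,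
        ((S.measEq r).1 kj - (S.measEq r).2 kj) * ξ kj = 0}) := by
      ext ξ; exact ⟨fun ⟨a, b, c⟩ => ⟨a, b, c⟩, fun ⟨a, b, c⟩ => ⟨a, b, c⟩⟩
    rw [this]
    exact h1.inter (h2.inter h3)
  have hsub : MAPolytope S ⊆ Metric.closedBall 0 1 := by
    rintro ξ ⟨h0, h1, -⟩
    rw [Metric.mem_closedBall, dist_zero_right]
    rw [pi_norm_le_iff_of_nonneg zero_le_one]
    intro kj
    rw [Real.norm_eq_abs, abs_of_nonneg (h0 kj)]
    calc ξ kj = ξ (kj.1, kj.2) := by rw [Prod.mk.eta]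
      _ ≤ ∑ k, ξ (k, kj.2) :=
        Finset.single_le_sum (fun k _ => h0 (k, kj.2)) (Finset.mem_univ kj.1)
      _ = 1 := h1 kj.2
  exact (isCompact_closedBall (0 : K × J → ℝ) 1).of_isClosed_subset hclosed hsub

/-- linear (vertex) characterization of the noncontextual set via the
extreme points of the measurement-assignment polytope. -/
theorem noncontextual_iff_vertex_decomposition
    {I J K : Type} [Fintype I] [Fintype J] [Fintype K]
    [Nonempty I] [Nonempty J] [Nonempty K]
    (S : Scenario I J K) (p : I → J → K → ℝ) (hp : IsBehavior p)
    (hV : (Set.extremePoints ℝ (MAPolytope S)).Finite) :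
    Noncontextual S p ↔
      ∃ μ : I → (K × J → ℝ) → ℝ,
        (∀ i, (∀ v ∈ hV.toFinset, 0 ≤ μ i v) ∧ ∑ v ∈ hV.toFinset, μ i v = 1) ∧
        (∀ s : S.PE, ∀ v ∈ hV.toFinset,
          ∑ i, ((S.prepEq s).1 i - (S.prepEq s).2 i) * μ i v = 0) ∧
        (∀ i j k, ∑ v ∈ hV.toFinset, v (k, j) * μ i v = p i j k) := by
  classical
  set t := hV.toFinset with ht
  constructor
  · rintro ⟨n, μ0, ξ, hμ0, hξ, hrep, hpe, hme⟩
    -- Krein-Milman: the polytope is the convex hull of its extreme points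
    have hKM : MAPolytope S = convexHull ℝ (↑t : Set (K × J → ℝ)) := by
      rw [ht, Set.Finite.coe_toFinset]
      conv_lhs => rw [← closure_convexHull_extremePoints (isCompact_MAPolytope S)
        (convex_MAPolytope S)]
      exact (Set.Finite.isCompact_convexHull ℝ hV).isClosed.closure_eq
    have hmem : ∀ l : Fin n, (fun kj : K × J => ξ l kj.2 kj.1) ∈ MAPolytope S := by
      intro l
      refine ⟨fun kj => (hξ l kj.2).1 kj.1, fun j => (hξ l j).2, fun r => ?_⟩
      exact hme r l
    have hwex : ∀ l : Fin n, ∃ w : (K × J → ℝ) → ℝ, (∀ v ∈ t, 0 ≤ w v) ∧ ∑ v ∈ t, w v = 1 ∧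
        t.centerMass w id = fun kj : K × J => ξ l kj.2 kj.1 := by
      intro l
      have := hmem l
      rw [hKM, Finset.convexHull_eq] at this
      exact this
    choose w hw0 hw1 hwc using hwex
    have hval : ∀ l k j, ξ l j k = ∑ v ∈ t, w l v * v (k, j) := by
      intro l k j
      have := congrFun ((Finset.centerMass_eq_of_sum_1 t id (hw1 l)).symm.trans (hwc l)) (k, j)
      rw [← this, Finset.sum_apply]
      exact Finset.sum_congr rfl fun v _ => rfl
    refine ⟨fun i v => ∑ l, w l v * μ0 i l, fun i => ⟨fun v hv => Finset.sum_nonneg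
      fun l _ => mul_nonneg (hw0 l v hv) ((hμ0 i).1 l), ?_⟩, fun s v hv => ?_, fun i j k => ?_⟩
    · rw [Finset.sum_comm]
      calc ∑ l : Fin n, ∑ v ∈ t, w l v * μ0 i l
          = ∑ l : Fin n, μ0 i l := Finset.sum_congr rfl fun l _ => by
            rw [← Finset.sum_mul, hw1 l, one_mul]
        _ = 1 := (hμ0 i).2
    · calc ∑ i, ((S.prepEq s).1 i - (S.prepEq s).2 i) * ∑ l, w l v * μ0 i l
          = ∑ l : Fin n, w l v * ∑ i, ((S.prepEq s).1 i - (S.prepEq s).2 i) * μ0 i l := by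
            simp_rw [Finset.mul_sum]
            rw [Finset.sum_comm]
            exact Finset.sum_congr rfl fun l _ => Finset.sum_congr rfl fun i _ => by ring
        _ = 0 := by
            refine Finset.sum_eq_zero fun l _ => ?_
            rw [hpe s l, mul_zero]
    · calc ∑ v ∈ t, v (k, j) * ∑ l, w l v * μ0 i l
          = ∑ l : Fin n, (∑ v ∈ t, w l v * v (k, j)) * μ0 i l := by
            simp_rw [Finset.mul_sum, Finset.sum_mul]
            rw [Finset.sum_comm]
            exact Finset.sum_congr rfl fun l _ => Finset.sum_congr rfl fun v _ => by ring
        _ = ∑ l : Fin n, ξ l j k * μ0 i l :=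
            Finset.sum_congr rfl fun l _ => by rw [← hval l k j]
        _ = p i j k := (hrep i j k).symm
  · rintro ⟨μ, hdist, hpe, hrep⟩
    set n := t.card with hn
    set e : Fin n ≃ {x // x ∈ t} := t.equivFin.symm with he
    have hsum : ∀ f : (K × J → ℝ) → ℝ, ∑ l : Fin n, f ((e l) : K × J → ℝ) = ∑ v ∈ t, f v := by
      intro f
      rw [← Finset.sum_coe_sort t f]
      exact Equiv.sum_comp e fun x => f x
    have hmemV : ∀ l : Fin n, ((e l : K × J → ℝ)) ∈ MAPolytope S := by
      intro l
      exact extremePoints_subset (hV.mem_toFinset.mp (e l).2)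
    refine ⟨n, fun i l => μ i (e l), fun l j k => (e l : K × J → ℝ) (k, j),
      fun i => ⟨fun l => (hdist i).1 _ (e l).2, by rw [hsum (μ i)]; exact (hdist i).2⟩,
      fun l j => ⟨fun k => (hmemV l).1 (k, j), (hmemV l).2.1 j⟩,
      fun i j k => ?_, fun s l => hpe s _ (e l).2, fun r l => ?_⟩
    · rw [hsum (fun v => v (k, j) * μ i v), hrep i j k]
    · have := (hmemV l).2.2 r
      rw [← this]
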